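/- Let G be a directed graph with vertex set V and let v be a vertex with no incoming edges (there is no u with (u,v) ∈ E). Then restriction of labellings along the inclusion V ∖ {v} ↪ V is an order isomorphism from the subposet of C(G) consisting of proper labellings ℓ with ℓ(v) = A onto the poset C(G ∖ {v}) of proper labellings of the full subgraph of G on V ∖ {v}. -/

import Mathlib

open CategoryTheory

/-- The three labels `A`, `B`, `C`. -/
inductive Label : Type
  | A | B | C
  deriving DecidableEq

/-- A labelling `ℓ` of the directed graph with vertex set `V` and edge relation `E`
is proper if for every edge `(v, w)`, either `ℓ v = A` or `ℓ w = B`. -/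
def IsProper {V : Type} (E : V → V → Prop) (ℓ : V → Label) : Prop :=
  ∀ v w, E v w → ℓ v = Label.A ∨ ℓ w = Label.B

/-- The proper labellings of the directed graph `(V, E)`. -/
def ProperLabelling (V : Type) (E : V → V → Prop) : Type :=
  { ℓ : V → Label // IsProper E ℓ }

/-- The poset `C(G)` of proper labellings: `ℓ ≤ ℓ'` iff at every vertex the labels agree,
or the label changes from `A` or `B` to `C`. -/
instance (V : Type) (E : V → V → Prop) : PartialOrder (ProperLabelling V E) where
  le ℓ ℓ' := ∀ v, ℓ.1 v = ℓ'.1 v ∨ (ℓ.1 v ≠ Label.C ∧ ℓ'.1 v = Label.C)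
  le_refl ℓ v := Or.inl rfl
  le_trans a b c hab hbc v := by
    rcases hab v with h | ⟨h1, h2⟩
    · rcases hbc v with h' | ⟨h1', h2'⟩
      · exact Or.inl (h.trans h')
      · exact Or.inr ⟨by rw [h]; exact h1', h2'⟩
    · rcases hbc v with h' | ⟨h1', h2'⟩
      · exact Or.inr ⟨h1, h'.symm.trans h2⟩
      · exact Or.inr ⟨h1, h2'⟩
  le_antisymm a b hab hba := by
    apply Subtype.ext
    funext v
    rcases hab v with h | ⟨h1, h2⟩
    · exact h
    · rcases hba v with h' | ⟨h1', h2'⟩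
      · exact h'.symm
      · exact absurd h2' h1

/-- Let `v` be a vertex of `G` with no incoming edges. Then restriction of labellings along
the inclusion `V ∖ {v} ↪ V` is an order isomorphism from the subposet of `C(G)` of proper
labellings assigning `A` to `v` onto the poset `C(G ∖ {v})` of proper labellings of the
full subgraph of `G` on `V ∖ {v}`. -/
theorem restriction_orderIso_of_no_incoming_edges
    (V : Type) (E : V → V → Prop) (v : V) (hv : ∀ u, ¬ E u v) :
    ∃ e : { ℓ : ProperLabelling V E // ℓ.1 v = Label.A } ≃o
        ProperLabelling { w : V // w ≠ v } (fun a b => E a.1 b.1),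
      ∀ (ℓ : { ℓ : ProperLabelling V E // ℓ.1 v = Label.A }) (w : { w : V // w ≠ v }),
        (e ℓ).1 w = ℓ.1.1 w.1 := by
  classical
  refine ⟨{
    toFun := fun ℓ => ⟨fun w => ℓ.1.1 w.1, fun a b hab => ℓ.1.2 a.1 b.1 hab⟩
    invFun := fun ℓ => ⟨⟨fun w => if h : w = v then Label.A else ℓ.1 ⟨w, h⟩, ?_⟩, by simp⟩
    left_inv := ?_
    right_inv := ?_
    map_rel_iff' := ?_ }, fun ℓ w => rfl⟩
  · intro a b hab
    by_cases ha : a = v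
    · simp [ha]
    · by_cases hb : b = v
      · exact absurd (hb ▸ hab) (hv a)
      · simpa [ha, hb] using ℓ.2 ⟨a, ha⟩ ⟨b, hb⟩ hab
  · intro ℓ
    apply Subtype.ext; apply Subtype.ext; funext w
    by_cases h : w = v
    · simp [h, ℓ.2]
    · simp [h]
  · intro ℓ
    apply Subtype.ext; funext w
    simp [w.2]
  · intro a b
    constructor
    · intro h w
      by_cases hw : w = v
      · subst hw; left; rw [a.2, b.2]
      · exact h ⟨w, hw⟩
    · intro h w
      exact h w.1
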